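/- Let A be a real symmetric positive definite n×n matrix, B a real m×n matrix, L a real m×N matrix, and R a real n×N matrix with A R = Bᵀ L, and assume Rᵀ A R is positive definite. Then for every α ∈ ℝᴺ, the supremum over nonzero ω ∈ ℝᴺ of ⟨B(Rω), Lα⟩ / ⟨A(Rω), Rω⟩^{1/2} equals ⟨(Rᵀ A R) α, α⟩^{1/2}. -/

import Mathlib

open Matrix

-- symmetric bilinear form lemmas
lemma sym_swap {N : ℕ} (M : Matrix (Fin N) (Fin N) ℝ) (hM : Mᵀ = M)
    (x y : Fin N → ℝ) : M.mulVec x ⬝ᵥ y = M.mulVec y ⬝ᵥ x := by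
  rw [dotProduct_comm, dotProduct_mulVec, ← mulVec_transpose, hM]

lemma cs {N : ℕ} (M : Matrix (Fin N) (Fin N) ℝ) (hM : M.PosDef) (hMs : Mᵀ = M)
    (x y : Fin N → ℝ) :
    M.mulVec x ⬝ᵥ y ≤ Real.sqrt ((M.mulVec x ⬝ᵥ x) * (M.mulVec y ⬝ᵥ y)) := by
  have hnn : ∀ z : Fin N → ℝ, 0 ≤ M.mulVec z ⬝ᵥ z := by
    intro z
    have := hM.posSemidef.dotProduct_mulVec_nonneg z
    simpa [dotProduct_comm] using this
  have hq : ∀ t : ℝ, 0 ≤ (M.mulVec y ⬝ᵥ y) * (t * t) + (2 * (M.mulVec x ⬝ᵥ y)) * t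
      + (M.mulVec x ⬝ᵥ x) := by
    intro t
    have h := hnn (x + t • y)
    have hxy := sym_swap M hMs x y
    simp only [mulVec_add, mulVec_smul, add_dotProduct, dotProduct_add, smul_dotProduct,
      dotProduct_smul, smul_eq_mul] at h
    rw [hxy] at h ⊢
    ring_nf at h ⊢
    linarith [h]
  have hd := discrim_le_zero hq
  rw [discrim] at hd
  rcases le_or_gt (M.mulVec x ⬝ᵥ y) 0 with h | h
  · exact h.trans (Real.sqrt_nonneg _)
  · rw [Real.le_sqrt h.le]
    · nlinarith [hd]
    · exact mul_nonneg (hnn x) (hnn y)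

theorem supremizer_enriched_sup {n m N : ℕ}
    (A : Matrix (Fin n) (Fin n) ℝ) (hA : A.PosDef)
    (B : Matrix (Fin m) (Fin n) ℝ)
    (L : Matrix (Fin m) (Fin N) ℝ) (R : Matrix (Fin n) (Fin N) ℝ)
    (hR : A * R = Bᵀ * L) (hRAR : (Rᵀ * A * R).PosDef) :
    ∀ α : Fin N → ℝ,
      sSup {r : ℝ | ∃ ω : Fin N → ℝ, ω ≠ 0 ∧
          r = (B.mulVec (R.mulVec ω)) ⬝ᵥ (L.mulVec α) /
            Real.sqrt ((A.mulVec (R.mulVec ω)) ⬝ᵥ (R.mulVec ω))}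
        = Real.sqrt (((Rᵀ * A * R).mulVec α) ⬝ᵥ α) := by
  intro α
  set M := Rᵀ * A * R with hMdef
  have hAt : Aᵀ = A := by
    have := hA.isHermitian
    simpa [Matrix.IsHermitian, Matrix.conjTranspose_eq_transpose_of_trivial] using this
  have hMs : Mᵀ = M := by
    rw [hMdef]
    simp [Matrix.transpose_mul, Matrix.mul_assoc, hAt]
  -- numerator rewrite
  have hnum : ∀ ω : Fin N → ℝ,
      (B.mulVec (R.mulVec ω)) ⬝ᵥ (L.mulVec α) = M.mulVec α ⬝ᵥ ω := by
    intro ω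
    rw [mulVec_mulVec, dotProduct_comm, dotProduct_mulVec, ← mulVec_transpose,
      mulVec_mulVec, transpose_mul, Matrix.mul_assoc, ← hR, hMdef,
      ← Matrix.mul_assoc, sym_swap _ hMs]
  have hden : ∀ ω : Fin N → ℝ,
      (A.mulVec (R.mulVec ω)) ⬝ᵥ (R.mulVec ω) = M.mulVec ω ⬝ᵥ ω := by
    intro ω
    rw [mulVec_mulVec, dotProduct_comm, dotProduct_mulVec, ← mulVec_transpose,
      mulVec_mulVec, transpose_mul, hAt, ← hMdef]
  -- now rewrite the set
  have hset : {r : ℝ | ∃ ω : Fin N → ℝ, ω ≠ 0 ∧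
          r = (B.mulVec (R.mulVec ω)) ⬝ᵥ (L.mulVec α) /
            Real.sqrt ((A.mulVec (R.mulVec ω)) ⬝ᵥ (R.mulVec ω))}
      = {r : ℝ | ∃ ω : Fin N → ℝ, ω ≠ 0 ∧
          r = (M.mulVec α ⬝ᵥ ω) / Real.sqrt (M.mulVec ω ⬝ᵥ ω)} := by
    ext r
    simp only [Set.mem_setOf_eq, hnum, hden]
  rw [hset]
  have hpos : ∀ ω : Fin N → ℝ, ω ≠ 0 → 0 < M.mulVec ω ⬝ᵥ ω := by
    intro ω hω
    have := hRAR.dotProduct_mulVec_pos hω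
    simpa [dotProduct_comm] using this
  by_cases hα : α = 0
  · subst hα
    have : Real.sqrt (M.mulVec 0 ⬝ᵥ (0 : Fin N → ℝ)) = 0 := by simp
    rw [this]
    rcases isEmpty_or_nonempty (Fin N) with hN | hN
    · have : {r : ℝ | ∃ ω : Fin N → ℝ, ω ≠ 0 ∧
          r = (M.mulVec 0 ⬝ᵥ ω) / Real.sqrt (M.mulVec ω ⬝ᵥ ω)} = ∅ := by
        ext r
        simp only [Set.mem_setOf_eq, Set.mem_empty_iff_false, iff_false]
        rintro ⟨ω, hω, -⟩
        exact hω (funext fun i => isEmptyElim i)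
      rw [this, Real.sSup_empty]
    · have hne : (fun _ : Fin N => (1:ℝ)) ≠ 0 := by
        intro h
        have := congrFun h hN.some
        norm_num at this
      have : {r : ℝ | ∃ ω : Fin N → ℝ, ω ≠ 0 ∧
          r = (M.mulVec 0 ⬝ᵥ ω) / Real.sqrt (M.mulVec ω ⬝ᵥ ω)} = {0} := by
        ext r
        simp only [Set.mem_setOf_eq, Set.mem_singleton_iff]
        constructor
        · rintro ⟨ω, hω, rfl⟩; simp
        · rintro rfl; exact ⟨_, hne, by simp⟩
      rw [this, csSup_singleton]
  · -- α ≠ 0 : sup is attained at ω = α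
    have hqpos := hpos α hα
    apply csSup_eq_of_is_forall_le_of_forall_le_imp_ge
    · exact ⟨_, α, hα, rfl⟩
    · rintro r ⟨ω, hω, rfl⟩
      have hden' := hpos ω hω
      have hs : 0 < Real.sqrt (M.mulVec ω ⬝ᵥ ω) := Real.sqrt_pos.2 hden'
      rw [div_le_iff₀ hs]
      calc M.mulVec α ⬝ᵥ ω ≤ Real.sqrt ((M.mulVec α ⬝ᵥ α) * (M.mulVec ω ⬝ᵥ ω)) :=
            cs M hRAR hMs α ω
        _ = Real.sqrt (M.mulVec α ⬝ᵥ α) * Real.sqrt (M.mulVec ω ⬝ᵥ ω) :=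
            Real.sqrt_mul hqpos.le _
    · intro ub hub
      have := hub _ ⟨α, hα, rfl⟩
      calc Real.sqrt (M.mulVec α ⬝ᵥ α)
          = (M.mulVec α ⬝ᵥ α) / Real.sqrt (M.mulVec α ⬝ᵥ α) := by
            rw [Real.div_sqrt]
        _ ≤ ub := this
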